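/- arXiv:1405.2238 — 2 statements merged into one kernel-verified Lean document; each statement's English description precedes it below -/
import Mathlib

section
/- Let ⊙ be a pseudo-multiplication on [0,∞] and let ν, τ be σ-maxitive measures on a σ-algebra 𝓑. If ν is semi-⊙-finite and admits a 𝓑-measurable density c with respect to τ (i.e. ν(B) = ∫_B c ⊙ dτ for all B ∈ 𝓑), then ν admits a 𝓑-measurable density with respect to τ taking only ⊙-finite values. -/
open scoped ENNReal
open Set Filter MeasureTheory

variable {E : Type*}

/-- `f : E → [0,∞]` is `𝓑`-measurable: `{f > t}` is measurable for every `t`. -/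
def Premeasurable [MeasurableSpace E] (f : E → ℝ≥0∞) : Prop :=
  ∀ t : ℝ≥0∞, MeasurableSet {x | t < f x}

/-- A maxitive measure on the σ-algebra of measurable subsets of `E`. -/
def Maxitive [MeasurableSpace E] (ν : Set E → ℝ≥0∞) : Prop :=
  ν ∅ = 0 ∧ ∀ A B : Set E, MeasurableSet A → MeasurableSet B →
    ν (A ∪ B) = max (ν A) (ν B)

/-- A σ-maxitive measure: a maxitive measure commuting with countable nondecreasing unions. -/
def SigmaMaxitive [MeasurableSpace E] (ν : Set E → ℝ≥0∞) : Prop :=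
  Maxitive ν ∧ ∀ B : ℕ → Set E, (∀ n, MeasurableSet (B n)) → Monotone B →
    ν (⋃ n, B n) = ⨆ n, ν (B n)

/-- `N` is `τ`-negligible: it is contained in a measurable set of `τ`-measure zero. -/
def Negligible [MeasurableSpace E] (τ : Set E → ℝ≥0∞) (N : Set E) : Prop :=
  ∃ B : Set E, MeasurableSet B ∧ N ⊆ B ∧ τ B = 0

/-- The `τ`-essential supremum of `f` over `B`: `inf { t > 0 : B ∩ {f > t} is τ-negligible }`. -/
noncomputable def essSupOn [MeasurableSpace E] (τ : Set E → ℝ≥0∞) (f : E → ℝ≥0∞)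
    (B : Set E) : ℝ≥0∞ :=
  sInf {t : ℝ≥0∞ | 0 < t ∧ Negligible τ (B ∩ {x | t < f x})}

/-- `ν ≪ τ`: absolute continuity. -/
def AbsCont [MeasurableSpace E] (ν τ : Set E → ℝ≥0∞) : Prop :=
  ∀ B : Set E, MeasurableSet B → τ B = 0 → ν B = 0

/-- `ν ⋘ τ`: strong absolute continuity, i.e. `ν` has a measurable relative density
with respect to `τ`. -/
def StrongAbsCont [MeasurableSpace E] (ν τ : Set E → ℝ≥0∞) : Prop :=
  ∃ f : E → ℝ≥0∞, Premeasurable f ∧ ∀ B : Set E, MeasurableSet B → ν B = essSupOn τ f B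

/-- `c` is a cardinal density of `ν`: `ν B = sup_{x ∈ B} c x` for every measurable `B`. -/
def IsCardinalDensity [MeasurableSpace E] (ν : Set E → ℝ≥0∞) (c : E → ℝ≥0∞) : Prop :=
  ∀ B : Set E, MeasurableSet B → ν B = ⨆ x ∈ B, c x

/-- `τ` is essential: there exists a σ-finite σ-additive measure `m` with the same
null measurable sets. -/
def Essential [MeasurableSpace E] (τ : Set E → ℝ≥0∞) : Prop :=
  ∃ m : Measure E, SigmaFinite m ∧ ∀ B : Set E, MeasurableSet B → (0 < τ B ↔ 0 < m B)

/-- A σ-ideal of the σ-algebra of measurable sets. -/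
def SigmaIdeal [MeasurableSpace E] (I : Set (Set E)) : Prop :=
  I.Nonempty ∧ (∀ S ∈ I, MeasurableSet S) ∧
  (∀ f : ℕ → Set E, (∀ n, f n ∈ I) → (⋃ n, f n) ∈ I) ∧
  (∀ B S : Set E, MeasurableSet B → S ∈ I → B ⊆ S → B ∈ I)

/-- `τ` is σ-principal: every σ-ideal has a greatest element modulo `τ`-negligible sets. -/
def SigmaPrincipal [MeasurableSpace E] (τ : Set E → ℝ≥0∞) : Prop :=
  ∀ I : Set (Set E), SigmaIdeal I → ∃ L ∈ I, ∀ S ∈ I, Negligible τ (S \ L)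

/-- A pseudo-multiplication on `[0,∞]`. -/
structure PseudoMul where
  op : ℝ≥0∞ → ℝ≥0∞ → ℝ≥0∞
  assoc : ∀ a b c, op (op a b) c = op a (op b c)
  contOn : ContinuousOn (fun q : ℝ≥0∞ × ℝ≥0∞ => op q.1 q.2) (Set.Ioo 0 ⊤ ×ˢ Set.univ)
  contLeft : ∀ t, ContinuousOn (fun s => op s t) (Set.Ioi 0)
  monoLeft : ∀ t, Monotone fun s => op s t
  monoRight : ∀ s, Monotone (op s)
  one : ℝ≥0∞
  one_op : ∀ t, op one t = t
  eq_zero : ∀ s t, op s t = 0 → s = 0 ∨ t = 0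
  zero_op : ∀ t, op 0 t = 0
  op_zero : ∀ t, op t 0 = 0

/-- `t` is `⊙`-finite: `inf_{s > 0} s ⊙ t = 0`. -/
def OdotFinite (p : PseudoMul) (t : ℝ≥0∞) : Prop :=
  (⨅ s ∈ Set.Ioi (0 : ℝ≥0∞), p.op s t) = 0

/-- The idempotent `⊙`-integral `∫_B f ⊙ dτ = sup_{t ∈ [0,∞)} t ⊙ τ (B ∩ {f > t})`. -/
noncomputable def iInt [MeasurableSpace E] (p : PseudoMul) (τ : Set E → ℝ≥0∞)
    (f : E → ℝ≥0∞) (B : Set E) : ℝ≥0∞ :=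
  ⨆ t ∈ Set.Iio (⊤ : ℝ≥0∞), p.op t (τ (B ∩ {x | t < f x}))

/-- `ν ≪_⊙ τ`: `ν B ≤ ∞ ⊙ τ B` for every measurable `B`. -/
def OdotAbsCont [MeasurableSpace E] (p : PseudoMul) (ν τ : Set E → ℝ≥0∞) : Prop :=
  ∀ B : Set E, MeasurableSet B → ν B ≤ p.op ⊤ (τ B)

/-- `ν` is semi-`⊙`-finite. -/
def SemiOdotFinite [MeasurableSpace E] (p : PseudoMul) (ν : Set E → ℝ≥0∞) : Prop :=
  ∀ B : Set E, MeasurableSet B →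
    ν B = ⨆ A ∈ {A : Set E | MeasurableSet A ∧ A ⊆ B ∧ OdotFinite p (ν A)}, ν A

/-- `τ` is σ-`⊙`-finite. -/
def SigmaOdotFinite [MeasurableSpace E] (p : PseudoMul) (τ : Set E → ℝ≥0∞) : Prop :=
  ∃ B : ℕ → Set E, (∀ n, MeasurableSet (B n)) ∧ (⋃ n, B n) = Set.univ ∧
    ∀ n, OdotFinite p (τ (B n))

/-- Continuity from below. -/
def ContFromBelow [MeasurableSpace E] (ν : Set E → ℝ≥0∞) : Prop :=
  ∀ B : ℕ → Set E, (∀ n, MeasurableSet (B n)) → Monotone B →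
    Tendsto (fun n => ν (B n)) atTop (nhds (ν (⋃ n, B n)))

/-- Continuity from above (no finiteness assumption). -/
def ContFromAbove [MeasurableSpace E] (ν : Set E → ℝ≥0∞) : Prop :=
  ∀ B : ℕ → Set E, (∀ n, MeasurableSet (B n)) → Antitone B →
    Tendsto (fun n => ν (B n)) atTop (nhds (ν (⋂ n, B n)))

/-- An optimal measure: a maxitive measure continuous from below and from above. -/
def Optimal [MeasurableSpace E] (ν : Set E → ℝ≥0∞) : Prop :=
  Maxitive ν ∧ ContFromBelow ν ∧ ContFromAbove ν

private lemma odotFinite_zero (p : PseudoMul) : OdotFinite p 0 := by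
  refine le_antisymm ?_ zero_le
  refine le_trans (iInf₂_le (1 : ℝ≥0∞) (by simp)) ?_
  simp [p.op_zero]

private lemma odotFinite_mono (p : PseudoMul) {t u : ℝ≥0∞} (h : t ≤ u)
    (hu : OdotFinite p u) : OdotFinite p t := by
  refine le_antisymm (le_trans ?_ (le_of_eq hu)) zero_le
  exact iInf₂_mono fun s _ => p.monoRight s h

private lemma not_odotFinite_op (p : PseudoMul) {t r : ℝ≥0∞}
    (ht : ¬ OdotFinite p t) (hr : r ≠ 0) : ¬ OdotFinite p (p.op t r) := by
  intro hfin
  have hδ0 : (⨅ s ∈ Set.Ioi (0:ℝ≥0∞), p.op s t) ≠ 0 := ht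
  have hle : p.op (⨅ s ∈ Set.Ioi (0:ℝ≥0∞), p.op s t) r
      ≤ ⨅ s ∈ Set.Ioi (0:ℝ≥0∞), p.op s (p.op t r) := by
    refine le_iInf₂ fun s hs => ?_
    rw [← p.assoc]
    exact p.monoLeft r (iInf₂_le s hs)
  rw [hfin] at hle
  rcases p.eq_zero _ _ (le_antisymm hle zero_le) with h | h
  · exact hδ0 h
  · exact hr h

private lemma Maxitive.mono [MeasurableSpace E] {ν : Set E → ℝ≥0∞} (h : Maxitive ν)
    {A B : Set E} (hA : MeasurableSet A) (hB : MeasurableSet B) (hAB : A ⊆ B) :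
    ν A ≤ ν B := by
  have h2 := h.2 A B hA hB
  rw [Set.union_eq_self_of_subset_left hAB] at h2
  rw [h2]
  exact le_max_left _ _

private lemma iInt_mono_set [MeasurableSpace E] (p : PseudoMul) {τ : Set E → ℝ≥0∞}
    (hτ : Maxitive τ) {f : E → ℝ≥0∞} (hf : Premeasurable f) {A B : Set E}
    (hA : MeasurableSet A) (hB : MeasurableSet B) (hAB : A ⊆ B) :
    iInt p τ f A ≤ iInt p τ f B :=
  iSup₂_mono fun t _ => p.monoRight t (Maxitive.mono hτ (hA.inter (hf t)) (hB.inter (hf t))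
    (Set.inter_subset_inter_left _ hAB))

/-- A semi-`⊙`-finite σ-maxitive measure with a measurable density admits a
measurable density taking only `⊙`-finite values. -/
theorem semiOdotFinite_density_odotFinite_valued [MeasurableSpace E] (p : PseudoMul)
    (ν τ : Set E → ℝ≥0∞) (hν : SigmaMaxitive ν) (hτ : SigmaMaxitive τ)
    (hsemi : SemiOdotFinite p ν) (c : E → ℝ≥0∞) (hc : Premeasurable c)
    (hd : ∀ B : Set E, MeasurableSet B → ν B = iInt p τ c B) :
    ∃ c' : E → ℝ≥0∞, Premeasurable c' ∧ (∀ x, OdotFinite p (c' x)) ∧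
      ∀ B : Set E, MeasurableSet B → ν B = iInt p τ c' B := by
    classical
  by_cases hall : ∀ t, OdotFinite p t
  · exact ⟨c, hc, fun x => hall _, hd⟩
  push_neg at hall
  set N : Set E := {x | ¬ OdotFinite p (c x)} with hN
  set θ : ℝ≥0∞ := sInf {t | ¬ OdotFinite p t} with hθdef
  have hup : ∀ {u v : ℝ≥0∞}, ¬ OdotFinite p u → u ≤ v → ¬ OdotFinite p v :=
    fun hu huv hv => hu (odotFinite_mono p huv hv)
  have hkey : MeasurableSet N ∧
      ∀ A : Set E, MeasurableSet A → τ (A ∩ N) ≠ 0 → ¬ OdotFinite p (ν A) := by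
    by_cases hθ : OdotFinite p θ
    · -- θ itself is ⊙-finite, so N = {x | θ < c x}
      have hθtop : θ ≠ ⊤ := by
        intro h
        obtain ⟨t0, ht0⟩ := hall
        apply ht0
        have h1 : θ ≤ t0 := sInf_le ht0
        have h2 : t0 = θ := le_antisymm (by rw [h]; exact le_top) h1
        rwa [← h2] at hθ
      have hSup : ∀ {v : ℝ≥0∞}, θ < v → ¬ OdotFinite p v := by
        intro v hv
        obtain ⟨u, huS, huv⟩ := sInf_lt_iff.mp hv
        exact hup huS huv.le
      have hNeq : N = {x | θ < c x} := by
        ext x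
        simp only [hN, Set.mem_setOf_eq]
        constructor
        · intro hx
          refine lt_of_le_of_ne ?_ (fun h => hx (by rw [← h]; exact hθ))
          exact sInf_le hx
        · exact fun hx => hSup hx
      have hNmeas : MeasurableSet N := hNeq ▸ hc θ
      refine ⟨hNmeas, fun A hA hr => ?_⟩
      obtain ⟨t, htanti, htmem, htlim⟩ :=
        exists_seq_strictAnti_tendsto' (lt_top_iff_ne_top.mpr hθtop)
      have hUnion : A ∩ N = ⋃ n, A ∩ {x | t n < c x} := by
        rw [hNeq]
        ext x
        simp only [Set.mem_inter_iff, Set.mem_iUnion, Set.mem_setOf_eq]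
        constructor
        · rintro ⟨hxA, hx⟩
          obtain ⟨n, hn⟩ := (htlim.eventually (eventually_lt_nhds hx)).exists
          exact ⟨n, hxA, hn⟩
        · rintro ⟨n, hxA, hn⟩
          exact ⟨hxA, (htmem n).1.trans hn⟩
      have hmonoU : Monotone fun n => A ∩ {x | t n < c x} := by
        intro m n hmn
        exact Set.inter_subset_inter_right _ fun x hx =>
          lt_of_le_of_lt (htanti.antitone hmn) hx
      have hτU : τ (A ∩ N) = ⨆ n, τ (A ∩ {x | t n < c x}) := by
        rw [hUnion]
        exact hτ.2 _ (fun n => hA.inter (hc (t n))) hmonoU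
      rw [hτU] at hr
      have hex : ∃ n, τ (A ∩ {x | t n < c x}) ≠ 0 := by
        by_contra hcon
        push_neg at hcon
        exact hr (by simp [hcon])
      obtain ⟨n, hn⟩ := hex
      have hterm : p.op (t n) (τ (A ∩ {x | t n < c x})) ≤ ν A := by
        rw [hd A hA]
        exact le_iSup₂ (f := fun s (_ : s ∈ Set.Iio (⊤:ℝ≥0∞)) =>
          p.op s (τ (A ∩ {x | s < c x}))) (t n) (htmem n).2
      exact fun hfin =>
        not_odotFinite_op p (hSup (htmem n).1) hn (odotFinite_mono p hterm hfin)
    · -- θ is not ⊙-finite, so N = {x | θ ≤ c x}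
      have hθ0 : (0:ℝ≥0∞) < θ :=
        pos_iff_ne_zero.mpr (fun h => hθ (h ▸ odotFinite_zero p))
      have hNeq : N = {x | θ ≤ c x} := by
        ext x
        simp only [hN, Set.mem_setOf_eq]
        constructor
        · intro hx
          exact sInf_le hx
        · intro hx
          exact hup hθ hx
      obtain ⟨t, htmono, htmem, htlim⟩ := exists_seq_strictMono_tendsto' hθ0
      have hNmeas : MeasurableSet N := by
        have hNi : N = ⋂ n, {x | t n < c x} := by
          rw [hNeq]
          ext x
          simp only [Set.mem_iInter, Set.mem_setOf_eq]
          constructor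
          · intro h n
            exact lt_of_lt_of_le (htmem n).2 h
          · intro h
            by_contra hcon
            push_neg at hcon
            obtain ⟨n, hn⟩ := (htlim.eventually (eventually_gt_nhds hcon)).exists
            exact absurd (h n) (not_lt.mpr hn.le)
        rw [hNi]
        exact MeasurableSet.iInter fun n => hc (t n)
      refine ⟨hNmeas, fun A hA hr => ?_⟩
      have hAN : MeasurableSet (A ∩ N) := hA.inter hNmeas
      have hterm : ∀ n, p.op (t n) (τ (A ∩ N)) ≤ ν A := by
        intro n
        have h1 : A ∩ N ∩ {x | t n < c x} = A ∩ N := by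
          refine Set.inter_eq_self_of_subset_left fun x hx => ?_
          have hx2 : θ ≤ c x := by
            rw [hNeq] at hx
            exact hx.2
          exact lt_of_lt_of_le (htmem n).2 hx2
        have h2 : p.op (t n) (τ (A ∩ N ∩ {x | t n < c x})) ≤ iInt p τ c (A ∩ N) :=
          le_iSup₂ (f := fun s (_ : s ∈ Set.Iio (⊤:ℝ≥0∞)) =>
            p.op s (τ (A ∩ N ∩ {x | s < c x}))) (t n) ((htmem n).2.trans_le le_top)
        rw [h1] at h2
        calc p.op (t n) (τ (A ∩ N)) ≤ iInt p τ c (A ∩ N) := h2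
          _ = ν (A ∩ N) := (hd _ hAN).symm
          _ ≤ ν A := Maxitive.mono hν.1 hAN hA Set.inter_subset_left
      have hlim2 : Tendsto (fun n => p.op (t n) (τ (A ∩ N))) atTop
          (nhds (p.op θ (τ (A ∩ N)))) := by
        have hcw := ((p.contLeft (τ (A ∩ N))) θ (Set.mem_Ioi.mpr hθ0)).tendsto
        exact hcw.comp (tendsto_nhdsWithin_of_tendsto_nhds_of_eventually_within _
          htlim (Eventually.of_forall fun n => (htmem n).1))
      have hle : p.op θ (τ (A ∩ N)) ≤ ν A :=
        le_of_tendsto hlim2 (Eventually.of_forall hterm)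
      exact fun hfin => not_odotFinite_op p hθ hr (odotFinite_mono p hle hfin)
  obtain ⟨hNmeas, claimA⟩ := hkey
  set c' : E → ℝ≥0∞ := fun x => if OdotFinite p (c x) then c x else 0 with hc'
  have hlevel : ∀ t : ℝ≥0∞, {x | t < c' x} = {x | t < c x} \ N := by
    intro t
    ext x
    by_cases h : OdotFinite p (c x) <;> simp [hc', h, hN]
  have hc'meas : Premeasurable c' := fun t => (hlevel t) ▸ (hc t).diff hNmeas
  have hc'fin : ∀ x, OdotFinite p (c' x) := by
    intro x
    by_cases h : OdotFinite p (c x)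
    · simpa [hc', h] using h
    · simpa [hc', h] using odotFinite_zero p
  refine ⟨c', hc'meas, hc'fin, fun B hB => ?_⟩
  have hτm := hτ.1
  have hle1 : iInt p τ c' B ≤ ν B := by
    rw [hd B hB]
    refine iSup₂_mono fun t _ => p.monoRight t (Maxitive.mono hτm
      (hB.inter (hc'meas t)) (hB.inter (hc t)) (Set.inter_subset_inter_right _ ?_))
    rw [hlevel t]
    exact Set.diff_subset
  have hge : ν B ≤ iInt p τ c' B := by
    rw [hsemi B hB]
    refine iSup₂_le fun A hAmem => ?_
    obtain ⟨hAmeas, hAB, hAfin⟩ := hAmem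
    have hτAN : τ (A ∩ N) = 0 := by
      by_contra h
      exact claimA A hAmeas h hAfin
    have hAint : ν A = iInt p τ c' A := by
      rw [hd A hAmeas]
      unfold iInt
      refine iSup_congr fun t => iSup_congr fun ht => ?_
      congr 1
      have hset : A ∩ {x | t < c x} =
          (A ∩ {x | t < c' x}) ∪ (A ∩ {x | t < c x} ∩ N) := by
        rw [hlevel t]
        ext x
        by_cases hx : x ∈ N <;> simp [hx] <;> tauto
      rw [hset, hτm.2 _ _ (hAmeas.inter (hc'meas t)) ((hAmeas.inter (hc t)).inter hNmeas)]
      have h0 : τ (A ∩ {x | t < c x} ∩ N) = 0 := by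
        refine le_antisymm (le_trans (Maxitive.mono hτm
          ((hAmeas.inter (hc t)).inter hNmeas) (hAmeas.inter hNmeas) ?_) hτAN.le) zero_le
        rintro x ⟨⟨h1, _⟩, h3⟩
        exact ⟨h1, h3⟩
      rw [h0, max_eq_left zero_le]
    rw [hAint]
    exact iInt_mono_set p hτm hc'meas hAmeas hB hAB
  exact le_antisymm hge hle1
end

section
/- Let ν, τ be σ-maxitive measures on a σ-algebra 𝓑 and assume τ is σ-principal. Then ν ≪ τ if and only if ν ⋘ τ; in this situation the relative density of ν with respect to τ is unique τ-almost everywhere. -/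
open scoped ENNReal
open Set Filter MeasureTheory

variable {E : Type*}

section AuxLemmas
variable [MeasurableSpace E]

lemma maxitive_mono {ν : Set E → ℝ≥0∞} (h : Maxitive ν) {A B : Set E}
    (hA : MeasurableSet A) (hB : MeasurableSet B) (hAB : A ⊆ B) : ν A ≤ ν B := by
  have := h.2 A B hA hB
  rw [Set.union_eq_right.mpr hAB] at this
  rw [this]; exact le_max_left _ _

lemma sigmaMaxitive_iUnion {ν : Set E → ℝ≥0∞} (h : SigmaMaxitive ν) (B : ℕ → Set E)
    (hB : ∀ n, MeasurableSet (B n)) : ν (⋃ n, B n) ≤ ⨆ n, ν (B n) := by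
  set C : ℕ → Set E := fun n => ⋃ k, ⋃ _ : k ≤ n, B k with hC
  have hCmeas : ∀ n, MeasurableSet (C n) := fun n =>
    MeasurableSet.iUnion fun k => MeasurableSet.iUnion fun _ => hB k
  have hCmono : Monotone C := by
    intro m n hmn
    exact Set.iUnion₂_subset fun k hk => Set.subset_iUnion₂ (s := fun k (_ : k ≤ n) => B k) k (hk.trans hmn)
  have hCunion : (⋃ n, C n) = ⋃ n, B n := by
    apply Set.Subset.antisymm
    · exact Set.iUnion_subset fun n => Set.iUnion₂_subset fun k _ => Set.subset_iUnion B k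
    · refine Set.iUnion_subset fun n => ?_
      have h1 : B n ⊆ C n := Set.subset_iUnion₂ (s := fun k (_ : k ≤ n) => B k) n le_rfl
      exact h1.trans (Set.subset_iUnion C n)
  have hsucc : ∀ n, C (n + 1) = C n ∪ B (n + 1) := by
    intro n
    ext x
    simp only [hC, Set.mem_iUnion, Set.mem_union, Nat.le_add_one_iff]
    constructor
    · rintro ⟨k, hk | rfl, hx⟩
      · exact Or.inl ⟨k, hk, hx⟩
      · exact Or.inr hx
    · rintro (⟨k, hk, hx⟩ | hx)
      · exact ⟨k, Or.inl hk, hx⟩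
      · exact ⟨n + 1, Or.inr rfl, hx⟩
  have hCle : ∀ n, ν (C n) ≤ ⨆ n, ν (B n) := by
    intro n
    induction n with
    | zero =>
      have : C 0 = B 0 := by
        ext x; simp [hC, Nat.le_zero]
      rw [this]; exact le_iSup (fun n => ν (B n)) 0
    | succ n ih =>
      rw [hsucc n, (h.1).2 _ _ (hCmeas n) (hB (n + 1))]
      exact max_le ih (le_iSup (fun n => ν (B n)) (n + 1))
  calc ν (⋃ n, B n) = ν (⋃ n, C n) := by rw [hCunion]
    _ = ⨆ n, ν (C n) := h.2 C hCmeas hCmono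
    _ ≤ ⨆ n, ν (B n) := iSup_le hCle

lemma sigmaMaxitive_iUnion' {ι : Type*} [Countable ι] {ν : Set E → ℝ≥0∞}
    (h : SigmaMaxitive ν) (B : ι → Set E) (hB : ∀ i, MeasurableSet (B i)) :
    ν (⋃ i, B i) ≤ ⨆ i, ν (B i) := by
  rcases isEmpty_or_nonempty ι with hι | hι
  · simp only [Set.iUnion_of_empty]
    rw [h.1.1]; exact zero_le
  · obtain ⟨e, he⟩ := exists_surjective_nat ι
    have : (⋃ i, B i) = ⋃ n, B (e n) := by
      apply Set.Subset.antisymm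
      · refine Set.iUnion_subset fun i => ?_
        obtain ⟨n, rfl⟩ := he i
        exact Set.subset_iUnion (fun n => B (e n)) n
      · exact Set.iUnion_subset fun n => Set.subset_iUnion B (e n)
    rw [this]
    refine (sigmaMaxitive_iUnion h _ (fun n => hB (e n))).trans ?_
    exact iSup_le fun n => le_iSup (fun i => ν (B i)) (e n)

lemma negligible_mono {τ : Set E → ℝ≥0∞} {N M : Set E} (h : Negligible τ M) (hNM : N ⊆ M) :
    Negligible τ N := by
  obtain ⟨A, hA, hMA, hτA⟩ := h
  exact ⟨A, hA, hNM.trans hMA, hτA⟩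

lemma negligible_iUnion {ι : Type*} [Countable ι] {τ : Set E → ℝ≥0∞} (hτ : SigmaMaxitive τ)
    (N : ι → Set E) (hN : ∀ i, Negligible τ (N i)) : Negligible τ (⋃ i, N i) := by
  choose A hAmeas hsub hzero using hN
  refine ⟨⋃ i, A i, MeasurableSet.iUnion hAmeas, Set.iUnion_mono hsub, ?_⟩
  refine le_antisymm ?_ (zero_le)
  refine (sigmaMaxitive_iUnion' hτ A hAmeas).trans ?_
  simp [hzero]

lemma negligible_union {τ : Set E → ℝ≥0∞} (hτ : SigmaMaxitive τ) {N M : Set E}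
    (hN : Negligible τ N) (hM : Negligible τ M) : Negligible τ (N ∪ M) := by
  obtain ⟨A, hA, hNA, hτA⟩ := hN
  obtain ⟨B, hB, hMB, hτB⟩ := hM
  exact ⟨A ∪ B, hA.union hB, Set.union_subset_union hNA hMB,
    by rw [hτ.1.2 A B hA hB, hτA, hτB]; simp⟩

lemma negligible_empty {τ : Set E → ℝ≥0∞} (hτ : SigmaMaxitive τ) : Negligible τ (∅ : Set E) :=
  ⟨∅, MeasurableSet.empty, Set.Subset.rfl, hτ.1.1⟩

/-- The abbreviation `D q = toNNReal q` as an extended nonneg real. -/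
noncomputable def Drat (q : ℚ) : ℝ≥0∞ := (Real.toNNReal q : ℝ≥0∞)

lemma Drat_lt_top (q : ℚ) : Drat q < ⊤ := ENNReal.coe_lt_top

lemma exists_maximal_of_le {ν τ : Set E → ℝ≥0∞} (hν : SigmaMaxitive ν)
    (hprin : SigmaPrincipal τ) (t : ℝ≥0∞) :
    ∃ L : Set E, MeasurableSet L ∧ ν L ≤ t ∧
      ∀ S : Set E, MeasurableSet S → ν S ≤ t → Negligible τ (S \ L) := by
  have hideal : SigmaIdeal {B : Set E | MeasurableSet B ∧ ν B ≤ t} := by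
    refine ⟨⟨∅, MeasurableSet.empty, by rw [hν.1.1]; exact zero_le⟩,
      fun S hS => hS.1, ?_, ?_⟩
    · intro f hf
      refine ⟨MeasurableSet.iUnion fun n => (hf n).1, ?_⟩
      exact (sigmaMaxitive_iUnion hν f fun n => (hf n).1).trans (iSup_le fun n => (hf n).2)
    · intro B S hB hS hBS
      exact ⟨hB, (maxitive_mono hν.1 hB hS.1 hBS).trans hS.2⟩
  obtain ⟨L, hL, hmax⟩ := hprin _ hideal
  exact ⟨L, hL.1, hL.2, fun S hS hSt => hmax S ⟨hS, hSt⟩⟩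

lemma strongAbsCont_of_absCont {ν τ : Set E → ℝ≥0∞} (hν : SigmaMaxitive ν)
    (hτ : SigmaMaxitive τ) (hprin : SigmaPrincipal τ) (habs : AbsCont ν τ) :
    StrongAbsCont ν τ := by
  classical
  have hL : ∀ q : ℚ, ∃ L : Set E, MeasurableSet L ∧ ν L ≤ Drat q ∧
      ∀ S : Set E, MeasurableSet S → ν S ≤ Drat q → Negligible τ (S \ L) :=
    fun q => exists_maximal_of_le hν hprin (Drat q)
  choose L hLmeas hLle hLmax using hL
  set f : E → ℝ≥0∞ := fun x => ⨅ q : ℚ, (if x ∈ L q then Drat q else ⊤) with hfdef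
  have hf : Measurable f := by
    refine Measurable.iInf fun q => Measurable.ite ?_ measurable_const measurable_const
    exact hLmeas q
  have hfpre : Premeasurable f := fun t => hf measurableSet_Ioi
  have h_in : ∀ (q : ℚ) (x : E), x ∈ L q → f x ≤ Drat q := by
    intro q x hx
    have := iInf_le (fun q : ℚ => if x ∈ L q then Drat q else ⊤) q
    rwa [if_pos hx] at this
  have h_lt : ∀ (x : E) (s : ℝ≥0∞), f x < s → ∃ q : ℚ, x ∈ L q ∧ Drat q < s := by
    intro x s hs
    obtain ⟨q, hq⟩ := iInf_lt_iff.mp hs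
    by_cases hx : x ∈ L q
    · rw [if_pos hx] at hq; exact ⟨q, hx, hq⟩
    · rw [if_neg hx] at hq; exact absurd hq not_top_lt
  -- ν {f ≤ t} ≤ t
  have claim2 : ∀ t : ℝ≥0∞, ν {x | f x ≤ t} ≤ t := by
    intro t
    refine le_of_forall_gt_imp_ge_of_dense fun b hb => ?_
    obtain ⟨q, _, h1, h2⟩ := ENNReal.lt_iff_exists_rat_btwn.mp hb
    set U : Set E := ⋃ r : ℚ, (if Drat r < Drat q then L r else ∅) with hU
    have hUmeas : MeasurableSet U := by
      refine MeasurableSet.iUnion fun r => ?_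
      by_cases hr : Drat r < Drat q
      · rw [if_pos hr]; exact hLmeas r
      · rw [if_neg hr]; exact MeasurableSet.empty
    have hsub : {x | f x ≤ t} ⊆ U := by
      intro x hx
      obtain ⟨r, hxr, hrq⟩ := h_lt x (Drat q) (lt_of_le_of_lt hx h1)
      refine Set.mem_iUnion.mpr ⟨r, ?_⟩
      rw [if_pos hrq]; exact hxr
    have hmeasle : MeasurableSet {x | f x ≤ t} := hf measurableSet_Iic
    refine le_trans (maxitive_mono hν.1 hmeasle hUmeas hsub) ?_
    refine le_trans (sigmaMaxitive_iUnion' hν _ fun r => ?_) ?_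
    · by_cases hr : Drat r < Drat q
      · rw [if_pos hr]; exact hLmeas r
      · rw [if_neg hr]; exact MeasurableSet.empty
    · refine le_trans (iSup_le fun r => ?_) h2.le
      by_cases hr : Drat r < Drat q
      · rw [if_pos hr]; exact (hLle r).trans hr.le
      · rw [if_neg hr, hν.1.1]; exact zero_le
  refine ⟨f, hfpre, fun B hB => le_antisymm ?_ ?_⟩
  · -- ν B ≤ essSupOn τ f B, uses habs
    refine le_sInf fun t ht => ?_
    obtain ⟨ht0, A, hA, hsubA, hτA⟩ := ht
    have hsplit : B = (B ∩ {x | f x ≤ t}) ∪ (B ∩ {x | t < f x}) := by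
      rw [← Set.inter_union_distrib_left]
      have huniv : {x | f x ≤ t} ∪ {x | t < f x} = Set.univ := by
        ext x; simp [le_or_gt]
      rw [huniv, Set.inter_univ]
    have hm1 : MeasurableSet (B ∩ {x | f x ≤ t}) := hB.inter (hf measurableSet_Iic)
    have hm2 : MeasurableSet (B ∩ {x | t < f x}) := hB.inter (hf measurableSet_Ioi)
    rw [hsplit, hν.1.2 _ _ hm1 hm2]
    refine max_le ?_ ?_
    · exact (maxitive_mono hν.1 hm1 (hf measurableSet_Iic) Set.inter_subset_right).trans
        (claim2 t)
    · have : ν A = 0 := habs A hA hτA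
      exact le_trans (le_trans (maxitive_mono hν.1 hm2 hA hsubA) this.le) (zero_le)
  · -- essSupOn τ f B ≤ ν B
    refine le_of_forall_gt_imp_ge_of_dense fun b hb => ?_
    obtain ⟨q, _, h1, h2⟩ := ENNReal.lt_iff_exists_rat_btwn.mp hb
    refine le_trans (sInf_le ⟨lt_of_le_of_lt (zero_le) h1, ?_⟩) h2.le
    refine negligible_mono (hLmax q B hB h1.le) ?_
    intro x hx
    obtain ⟨hxB, hxf⟩ := hx
    refine ⟨hxB, fun hxL => ?_⟩
    exact absurd (lt_of_lt_of_le hxf (h_in q x hxL)) (lt_irrefl _)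

lemma absCont_of_strongAbsCont {ν τ : Set E → ℝ≥0∞} (hτ : SigmaMaxitive τ)
    (h : StrongAbsCont ν τ) : AbsCont ν τ := by
  obtain ⟨f, _, hf⟩ := h
  intro B hB hτB
  rw [hf B hB]
  refine le_antisymm ?_ (zero_le)
  refine le_of_forall_gt_imp_ge_of_dense fun b hb => ?_
  exact sInf_le ⟨hb, ⟨B, hB, Set.inter_subset_left, hτB⟩⟩

lemma measurableSet_ge_of_premeasurable {g : E → ℝ≥0∞} (hg : Premeasurable g) (q : ℚ) :
    MeasurableSet {x | Drat q ≤ g x} := by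
  classical
  have heq : {x | Drat q ≤ g x} =
      ⋂ r : ℚ, (if Drat r < Drat q then {x | Drat r < g x} else Set.univ) := by
    ext x
    simp only [Set.mem_iInter, Set.mem_setOf_eq]
    constructor
    · intro h r
      split_ifs with hr
      · exact lt_of_lt_of_le hr h
      · trivial
    · intro h
      by_contra hlt
      push_neg at hlt
      obtain ⟨r, _, h1, h2⟩ := ENNReal.lt_iff_exists_rat_btwn.mp hlt
      have := h r
      rw [if_pos (show Drat r < Drat q from h2)] at this
      exact absurd this (not_lt.mpr h1.le)
  rw [heq]
  refine MeasurableSet.iInter fun r => ?_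
  split_ifs with hr
  · exact hg (Drat r)
  · exact MeasurableSet.univ

lemma negligible_band {ν τ : Set E → ℝ≥0∞} (hτ : SigmaMaxitive τ)
    {f g : E → ℝ≥0∞} (hfp : Premeasurable f) (hgp : Premeasurable g)
    (hf : ∀ B : Set E, MeasurableSet B → ν B = essSupOn τ f B)
    (hg : ∀ B : Set E, MeasurableSet B → ν B = essSupOn τ g B)
    {p q : ℚ} (hpq : Drat p < Drat q) :
    Negligible τ ({x | f x ≤ Drat p} ∩ {x | Drat q ≤ g x}) := by
  by_contra hneg
  set C := {x | f x ≤ Drat p} ∩ {x | Drat q ≤ g x} with hCdef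
  have hCmeas : MeasurableSet C := by
    refine MeasurableSet.inter ?_ (measurableSet_ge_of_premeasurable hgp q)
    have : {x | f x ≤ Drat p} = {x | Drat p < f x}ᶜ := by
      ext x; simp [not_lt]
    rw [this]
    exact (hfp (Drat p)).compl
  have h1 : ν C ≤ Drat p := by
    rw [hf C hCmeas]
    refine le_of_forall_gt_imp_ge_of_dense fun b hb => ?_
    refine sInf_le ⟨lt_of_le_of_lt (zero_le) hb, ?_⟩
    have : C ∩ {x | b < f x} = ∅ := by
      ext x
      simp only [Set.mem_inter_iff, Set.mem_setOf_eq, Set.mem_empty_iff_false, iff_false,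
        not_and, hCdef]
      rintro ⟨hxf, _⟩ hxb
      exact absurd (lt_of_le_of_lt (hxb.le.trans hxf) hb) (lt_irrefl _)
    rw [this]
    exact negligible_empty hτ
  have h2 : Drat q ≤ ν C := by
    rw [hg C hCmeas]
    refine le_sInf fun t ht => ?_
    obtain ⟨_, hneg'⟩ := ht
    by_contra hlt
    push_neg at hlt
    refine hneg (negligible_mono hneg' ?_)
    intro x hx
    exact ⟨hx, lt_of_lt_of_le hlt hx.2⟩
  exact absurd (h2.trans h1) (not_le.mpr hpq)

lemma negligible_lt_of_densities {ν τ : Set E → ℝ≥0∞} (hτ : SigmaMaxitive τ)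
    {f g : E → ℝ≥0∞} (hfp : Premeasurable f) (hgp : Premeasurable g)
    (hf : ∀ B : Set E, MeasurableSet B → ν B = essSupOn τ f B)
    (hg : ∀ B : Set E, MeasurableSet B → ν B = essSupOn τ g B) :
    Negligible τ {x | f x < g x} := by
  classical
  have hsub : {x | f x < g x} ⊆ ⋃ pq : ℚ × ℚ,
      (if Drat pq.1 < Drat pq.2 then {x | f x ≤ Drat pq.1} ∩ {x | Drat pq.2 ≤ g x}
       else ∅) := by
    intro x hx
    obtain ⟨r, _, hr1, hr2⟩ := ENNReal.lt_iff_exists_rat_btwn.mp hx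
    obtain ⟨p, _, hp1, hp2⟩ := ENNReal.lt_iff_exists_rat_btwn.mp hr1
    refine Set.mem_iUnion.mpr ⟨(p, r), ?_⟩
    rw [if_pos (show Drat (p, r).1 < Drat (p, r).2 from hp2)]
    exact ⟨hp1.le, hr2.le⟩
  refine negligible_mono (negligible_iUnion hτ _ fun pq => ?_) hsub
  by_cases hpq : Drat pq.1 < Drat pq.2
  · rw [if_pos hpq]
    exact negligible_band hτ hfp hgp hf hg hpq
  · rw [if_neg hpq]
    exact negligible_empty hτ

end AuxLemmas

/-- If `τ` is σ-principal, then `ν ≪ τ` iff `ν ⋘ τ`, and the relative density is unique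
`τ`-almost everywhere. -/
theorem sigmaPrincipal_absCont_iff_strongAbsCont [MeasurableSpace E]
    (ν τ : Set E → ℝ≥0∞) (hν : SigmaMaxitive ν) (hτ : SigmaMaxitive τ)
    (hprin : SigmaPrincipal τ) :
    (AbsCont ν τ ↔ StrongAbsCont ν τ) ∧
    (∀ f g : E → ℝ≥0∞, Premeasurable f → Premeasurable g →
      (∀ B : Set E, MeasurableSet B → ν B = essSupOn τ f B) →
      (∀ B : Set E, MeasurableSet B → ν B = essSupOn τ g B) →
      Negligible τ {x | f x ≠ g x}) := by
  constructor
  · exact ⟨fun h => strongAbsCont_of_absCont hν hτ hprin h,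
      fun h => absCont_of_strongAbsCont hτ h⟩
  · intro f g hfp hgp hf hg
    have h1 := negligible_lt_of_densities hτ hfp hgp hf hg
    have h2 := negligible_lt_of_densities hτ hgp hfp hg hf
    have hne : {x | f x ≠ g x} = {x | f x < g x} ∪ {x | g x < f x} := by
      ext x
      simp only [Set.mem_setOf_eq, Set.mem_union, ne_iff_lt_or_gt, gt_iff_lt]
    rw [hne]
    exact negligible_union hτ h1 h2
end
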